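/- arXiv:2310.07919 — 2 statements merged into one kernel-verified Lean document; each statement's English description precedes it below -/
import Mathlib

section
/- Let (V,E) be a history sDAG and let f : E → W be an edge weight function with W clade-ordered with respect to f and (V,E). Then there exists a history sDAG (V',E') which is a trim of (V,E) such that the histories in (V',E') are exactly the minimum-weight (with respect to g_f) histories in (V,E). -/
universe u v

/-- A node of a history sDAG: either the universal ancestor (UA) node `ρ`,
or a node carrying a label `ℓ : Y` and a subpartition `U : Set (Set Y)`. -/
inductive HNode (Y : Type u) : Type u
  | ua : HNode Y
  | node : Y → Set (Set Y) → HNode Y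

namespace HistorySDAGs

variable {Y : Type u}

/-- `U ∈ Part(Y)`: `U` is a set of pairwise disjoint nonempty (finite) clades with `|U| ≠ 1`. -/
def IsPart (U : Set (Set Y)) : Prop :=
  (∀ C ∈ U, C ≠ ∅) ∧
  (∀ C₁ ∈ U, ∀ C₂ ∈ U, C₁ ≠ C₂ → Disjoint C₁ C₂) ∧
  (∀ C, U ≠ {C}) ∧
  U.Finite ∧ ∀ C ∈ U, C.Finite

open Classical in
/-- The clade union of a node. -/
noncomputable def cladeUnion : HNode Y → Set Y
  | HNode.ua => ∅
  | HNode.node ℓ U => if U = ∅ then {ℓ} else ⋃₀ U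

/-- Reachability via directed edges in `E`. -/
def Reach (E : Set (HNode Y × HNode Y)) (a b : HNode Y) : Prop :=
  Relation.ReflTransGen (fun x y => (x, y) ∈ E) a b

/-- `(V, E)` is a history sDAG on labels `Y`. -/
structure IsHSDAG (V : Set (HNode Y)) (E : Set (HNode Y × HNode Y)) : Prop where
  ua_mem : HNode.ua ∈ V
  valid : ∀ ℓ U, HNode.node ℓ U ∈ V → IsPart U
  edge_mem : ∀ e ∈ E, e.1 ∈ V ∧ e.2 ∈ V
  reach_ua : ∀ v ∈ V, Reach E HNode.ua v
  no_in_ua : ∀ v : HNode Y, (v, HNode.ua) ∉ E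
  edge_clade : ∀ ℓ U v, (HNode.node ℓ U, v) ∈ E → cladeUnion v ∈ U
  clade_cov : ∀ ℓ U, HNode.node ℓ U ∈ V → ∀ C ∈ U,
      ∃ v, (HNode.node ℓ U, v) ∈ E ∧ cladeUnion v = C

/-- Every node-clade pair of `V` has exactly one descendant edge in `E`. -/
def UniqueDesc (V : Set (HNode Y)) (E : Set (HNode Y × HNode Y)) : Prop :=
  ∀ ℓ U, HNode.node ℓ U ∈ V → ∀ C ∈ U,
    ∃! vc, (HNode.node ℓ U, vc) ∈ E ∧ cladeUnion vc = C

/-- `(V, E)` is a history: a history sDAG in which `ρ` has exactly one child and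
each node-clade pair has exactly one descendant edge. -/
def IsHistory (V : Set (HNode Y)) (E : Set (HNode Y × HNode Y)) : Prop :=
  IsHSDAG V E ∧ (∃! v, (HNode.ua, v) ∈ E) ∧ UniqueDesc V E

/-- `(Vs, Es)` is a subhistory of `(V, E)` with root node `vr`. -/
structure IsSubhistoryRooted (V : Set (HNode Y)) (E : Set (HNode Y × HNode Y))
    (Vs : Set (HNode Y)) (Es : Set (HNode Y × HNode Y)) (vr : HNode Y) : Prop where
  subV : Vs ⊆ V
  subE : Es ⊆ E
  ua_not_mem : HNode.ua ∉ Vs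
  edge_mem : ∀ e ∈ Es, e.1 ∈ Vs ∧ e.2 ∈ Vs
  root_mem : vr ∈ Vs
  reach_root : ∀ v ∈ Vs, Reach Es vr v
  unique_desc : ∀ ℓ U, HNode.node ℓ U ∈ Vs → ∀ C ∈ U,
      ∃! vc, (HNode.node ℓ U, vc) ∈ Es ∧ cladeUnion vc = C

/-- `(Vs, Es)` is a subhistory of `(V, E)`. -/
def IsSubhistory (V : Set (HNode Y)) (E : Set (HNode Y × HNode Y))
    (Vs : Set (HNode Y)) (Es : Set (HNode Y × HNode Y)) : Prop :=
  ∃ vr, IsSubhistoryRooted V E Vs Es vr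

/-- `(Vt, Et)` is a history in (a trim of) the history sDAG `(V, E)`. -/
def HistoryIn (V : Set (HNode Y)) (E : Set (HNode Y × HNode Y))
    (Vt : Set (HNode Y)) (Et : Set (HNode Y × HNode Y)) : Prop :=
  Vt ⊆ V ∧ Et ⊆ E ∧ IsHistory Vt Et

/-- The set of labels of leaf nodes in a node set. -/
def leafLabels (Vt : Set (HNode Y)) : Set Y := {ℓ | HNode.node ℓ ∅ ∈ Vt}

/-- A candidate history/graph: a pair of a node set and an edge set. -/
abbrev Hist (Y : Type u) := Set (HNode Y) × Set (HNode Y × HNode Y)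

/-- The node set of the history sDAG constructed from the collection `T`. -/
def unionV (T : Set (Hist Y)) : Set (HNode Y) := ⋃ t ∈ T, t.1

/-- The edge set of the history sDAG constructed from the collection `T`. -/
def unionE (T : Set (Hist Y)) : Set (HNode Y × HNode Y) := ⋃ t ∈ T, t.2

/-- The node set of the complete history sDAG on labels `Y`. -/
def completeV (Y : Type u) : Set (HNode Y) :=
  {v | v = HNode.ua ∨ ∃ ℓ U, v = HNode.node ℓ U ∧ IsPart U}

/-- The edge set of the complete history sDAG on labels `Y`. -/
def completeE (Y : Type u) : Set (HNode Y × HNode Y) :=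
  {e | e.1 ∈ completeV Y ∧ e.2 ∈ completeV Y ∧ e.2 ≠ HNode.ua ∧
    (e.1 = HNode.ua ∨ ∃ ℓ U, e.1 = HNode.node ℓ U ∧ cladeUnion e.2 ∈ U)}

variable {W : Type v}

/-- The weight `g_f` of a subgraph with edge set `Es`: the sum of `f` over all edges. -/
noncomputable def gweight [AddCommMonoid W] (f : HNode Y × HNode Y → W)
    (Es : Set (HNode Y × HNode Y)) : W := ∑ᶠ e ∈ Es, f e

/-- The order is total on the subset `S` of `W`. -/
def TotalOn [PartialOrder W] (S : Set W) : Prop := ∀ a ∈ S, ∀ b ∈ S, a ≤ b ∨ b ≤ a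

/-- The order respects addition on the subset `S` of `W`. -/
def RespectsAdd [AddCommMonoid W] [PartialOrder W] (S : Set W) : Prop :=
  ∀ a ∈ S, ∀ b ∈ S, ∀ c : W, a < b ↔ a + c < b + c

/-- Weights of subhistories of `(V, E)` rooted at `v`. -/
def subWeights [AddCommMonoid W] (f : HNode Y × HNode Y → W)
    (V : Set (HNode Y)) (E : Set (HNode Y × HNode Y)) (v : HNode Y) : Set W :=
  {w | ∃ Vs Es, IsSubhistoryRooted V E Vs Es v ∧ w = gweight f Es}

/-- Weights of augmented subhistories below the node-clade pair `(v, C)`. -/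
def augWeights [AddCommMonoid W] (f : HNode Y × HNode Y → W)
    (V : Set (HNode Y)) (E : Set (HNode Y × HNode Y)) (v : HNode Y) (C : Set Y) : Set W :=
  {w | ∃ vc Vs Es, (v, vc) ∈ E ∧ cladeUnion vc = C ∧ IsSubhistoryRooted V E Vs Es vc ∧
    w = gweight f (insert (v, vc) Es)}

/-- Weights of histories in `(V, E)`. -/
def historyWeights [AddCommMonoid W] (f : HNode Y × HNode Y → W)
    (V : Set (HNode Y)) (E : Set (HNode Y × HNode Y)) : Set W :=
  {w | ∃ Vt Et, HistoryIn V E Vt Et ∧ w = gweight f Et}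

/-- `W` is clade-ordered with respect to `f` and `(V, E)`. -/
def CladeOrdered [AddCommMonoid W] [PartialOrder W] (f : HNode Y × HNode Y → W)
    (V : Set (HNode Y)) (E : Set (HNode Y × HNode Y)) : Prop :=
  (∀ v ∈ V, v ≠ HNode.ua →
      TotalOn (subWeights f V E v) ∧ RespectsAdd (subWeights f V E v)) ∧
  (∀ ℓ U, HNode.node ℓ U ∈ V → ∀ C ∈ U,
      TotalOn (augWeights f V E (HNode.node ℓ U) C) ∧
      RespectsAdd (augWeights f V E (HNode.node ℓ U) C)) ∧
  TotalOn (historyWeights f V E)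

/-- The minimum-weight histories in `(V, E)` with respect to `g_f`. -/
def minHistories [AddCommMonoid W] [PartialOrder W] (f : HNode Y × HNode Y → W)
    (V : Set (HNode Y)) (E : Set (HNode Y × HNode Y)) : Set (Hist Y) :=
  {t | HistoryIn V E t.1 t.2 ∧
    ∀ t' : Hist Y, HistoryIn V E t'.1 t'.2 → gweight f t.2 ≤ gweight f t'.2}

open Classical in
/-- The map `q` collapsing the edge `(vp, vc)`, sending both `vp` and `vc` to `vp'`. -/
noncomputable def collapseMap (vp vc vp' : HNode Y) (v : HNode Y) : HNode Y :=
  if v = vp ∨ v = vc then vp' else v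

/-- The history obtained by collapsing the edge `(vp, vc)` (into `vp'`) in `t`. -/
noncomputable def collapseEdgeHist (vp vc vp' : HNode Y) (t : Hist Y) : Hist Y :=
  (collapseMap vp vc vp' '' t.1,
   (fun e : HNode Y × HNode Y => (collapseMap vp vc vp' e.1, collapseMap vp vc vp' e.2)) ''
     (t.2 \ {(vp, vc)}))

/-- The new parent node `(ℓ_p, (U_p ∪ U_c) \ {CU(v_c)})` formed when collapsing an edge. -/
noncomputable def newParent : HNode Y → HNode Y → HNode Y
  | HNode.node ℓp Up, HNode.node ℓc Uc =>
      HNode.node ℓp ((Up ∪ Uc) \ {cladeUnion (HNode.node ℓc Uc)})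
  | v, _ => v

/-- `t'` results from `t` by collapsing one label-collapsible edge. -/
def LabelCollapseStep (t t' : Hist Y) : Prop :=
  ∃ ℓ Up Uc, (HNode.node ℓ Up, HNode.node ℓ Uc) ∈ t.2 ∧ Uc ≠ ∅ ∧
    t' = collapseEdgeHist (HNode.node ℓ Up) (HNode.node ℓ Uc)
        (newParent (HNode.node ℓ Up) (HNode.node ℓ Uc)) t

/-- `t` is label-collapsed: it has no label-collapsible edge. -/
def LabelCollapsed (t : Hist Y) : Prop :=
  ∀ ℓ Up Uc, (HNode.node ℓ Up, HNode.node ℓ Uc) ∈ t.2 → Uc = ∅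

/-- `(vp, vc)` is a label-collapsible edge of `G`. -/
def LabelCollapsibleEdge (G : Hist Y) (vp vc : HNode Y) : Prop :=
  (vp, vc) ∈ G.2 ∧ ∃ ℓ Up Uc, vp = HNode.node ℓ Up ∧ vc = HNode.node ℓ Uc ∧ Uc ≠ ∅

/-- `T` is a label-collapsible edge cover of `G`. -/
def LabelCollapsibleEdgeCover (G : Hist Y) (T : Set (Hist Y)) : Prop :=
  (∀ t ∈ T, HistoryIn G.1 G.2 t.1 t.2) ∧
  (∀ e ∈ G.2, ∃ t ∈ T, e ∈ t.2) ∧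
  (∀ vp vc, LabelCollapsibleEdge G vp vc →
    ∀ Vs Es, IsSubhistory G.1 G.2 Vs Es → (vp, vc) ∈ Es →
      ∃ t ∈ T, Vs ⊆ t.1 ∧ Es ⊆ t.2)

open Classical in
/-- Collapsing the edge `(vp, vc)` in the history sDAG `G`, via `E⁺`, `R`, `E⁻`, `E'`, `V'`. -/
noncomputable def collapseDAGEdge (vp vc : HNode Y) (G : Hist Y) : Hist Y :=
  let vp' := newParent vp vc
  let Eplus : Set (HNode Y × HNode Y) :=
    (G.2 ∪ {e | ∃ v, e = (v, vp') ∧ (v, vp) ∈ G.2}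
        ∪ {e | ∃ v, e = (vp', v) ∧ (vp, v) ∈ G.2 ∧ cladeUnion v ≠ cladeUnion vc}
        ∪ {e | ∃ v, e = (vp', v) ∧ (vc, v) ∈ G.2}) \ {(vp, vc)}
  let R : Set (HNode Y × HNode Y) :=
    if ∃ v, (vp, v) ∈ Eplus ∧ cladeUnion v = cladeUnion vc then ∅
    else {e ∈ Eplus | e.2 = vp}
  let Eminus := Eplus \ R
  let E' := {e ∈ Eminus | Reach Eminus HNode.ua e.1}
  ({v | ∃ e ∈ E', v = e.1 ∨ v = e.2}, E')

/-- `t'` is obtained from `t` by a subhistory swap, replacing a subhistory of `t` by a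
conforming subhistory of some history in `S`. -/
def SwapStepUsing (S : Set (Hist Y)) (t t' : Hist Y) : Prop :=
  ∃ t₂ ∈ S, ∃ Vs' Es' vr' vp,
    IsSubhistoryRooted t₂.1 t₂.2 Vs' Es' vr' ∧ (vp, vr') ∈ t₂.2 ∧
    ∃ Vs Es vr, IsSubhistoryRooted t.1 t.2 Vs Es vr ∧ (vp, vr) ∈ t.2 ∧
      leafLabels Vs = leafLabels Vs' ∧
      t' = ((t.1 \ Vs) ∪ Vs', (t.2 \ (Es ∪ {(vp, vr)})) ∪ (Es' ∪ {(vp, vr')}))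

/-- Leaves of an abstract rooted graph. -/
def IsLeafIn {α : Type v} (nodes : Set α) (edges : Set (α × α)) (x : α) : Prop :=
  x ∈ nodes ∧ ∀ c, (x, c) ∉ edges

/-- Reachability via directed edges in an abstract graph. -/
def GReach {α : Type v} (edges : Set (α × α)) (a b : α) : Prop :=
  Relation.ReflTransGen (fun x y => (x, y) ∈ edges) a b

/-- An (internally) labeled tree: a rooted multifurcating tree with no unifurcations,
with node labels in `Y` that are injective on leaves. -/
structure IsLabeledTree {α : Type v} (nodes : Set α) (edges : Set (α × α))
    (root : α) (lab : α → Y) : Prop where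
  root_mem : root ∈ nodes
  edge_mem : ∀ e ∈ edges, e.1 ∈ nodes ∧ e.2 ∈ nodes
  reach_root : ∀ x ∈ nodes, GReach edges root x
  unique_parent : ∀ x a b, (a, x) ∈ edges → (b, x) ∈ edges → a = b
  no_parent_root : ∀ a, (a, root) ∉ edges
  acyclic : ∀ x, ¬ Relation.TransGen (fun a b => (a, b) ∈ edges) x x
  no_unif : ∀ x ∈ nodes, ¬ (∃! c, (x, c) ∈ edges)
  leaf_inj : ∀ x y, IsLeafIn nodes edges x → IsLeafIn nodes edges y → lab x = lab y → x = y
  finite : nodes.Finite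

/-- The set `C_w` of leaf labels below a node `w` of an abstract labeled tree. -/
def leavesBelow {α : Type v} (nodes : Set α) (edges : Set (α × α)) (lab : α → Y) (w : α) :
    Set Y :=
  {y | ∃ u, IsLeafIn nodes edges u ∧ GReach edges w u ∧ y = lab u}

/-- The history sDAG node `v_w` associated to a node `w` of a labeled tree. -/
def treeNodeOf {α : Type v} (nodes : Set α) (edges : Set (α × α)) (lab : α → Y) (w : α) :
    HNode Y :=
  HNode.node (lab w) {C | ∃ w', (w, w') ∈ edges ∧ C = leavesBelow nodes edges lab w'}

/-- The node set `V_t` of the history associated to a labeled tree. -/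
def treeToHistV {α : Type v} (nodes : Set α) (edges : Set (α × α)) (lab : α → Y) :
    Set (HNode Y) :=
  insert HNode.ua (treeNodeOf nodes edges lab '' nodes)

/-- The edge set `E_t` of the history associated to a labeled tree. -/
def treeToHistE {α : Type v} (nodes : Set α) (edges : Set (α × α)) (root : α) (lab : α → Y) :
    Set (HNode Y × HNode Y) :=
  insert (HNode.ua, treeNodeOf nodes edges lab root)
    {e | ∃ w₁ w₂, (w₁, w₂) ∈ edges ∧
      e = (treeNodeOf nodes edges lab w₁, treeNodeOf nodes edges lab w₂)}


section TrimProof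

open Relation

variable {Y : Type u}

/-- Descendant nodes of `w` (via edges of `Et`). -/
def Dnodes (Et : Set (HNode Y × HNode Y)) (w : HNode Y) : Set (HNode Y) :=
  {u | Reach Et w u}

/-- Edges of `Et` whose source is a descendant of `w`. -/
def Eind (Et : Set (HNode Y × HNode Y)) (w : HNode Y) : Set (HNode Y × HNode Y) :=
  {e ∈ Et | Reach Et w e.1}

lemma mem_Dnodes {Et : Set (HNode Y × HNode Y)} {w u : HNode Y} :
    u ∈ Dnodes Et w ↔ Reach Et w u := Iff.rfl

lemma mem_Eind {Et : Set (HNode Y × HNode Y)} {w : HNode Y} {e : HNode Y × HNode Y} :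
    e ∈ Eind Et w ↔ e ∈ Et ∧ Reach Et w e.1 := Iff.rfl

lemma Eind_subset (Et : Set (HNode Y × HNode Y)) (w : HNode Y) : Eind Et w ⊆ Et :=
  fun _ he => he.1

lemma reach_mono {Es Et : Set (HNode Y × HNode Y)} (hsub : Es ⊆ Et) {a b : HNode Y}
    (hr : Reach Es a b) : Reach Et a b :=
  Relation.ReflTransGen.mono (fun _ _ hxy => hsub hxy) _ _ hr

lemma node_ne_ua {ℓ : Y} {U : Set (Set Y)} : HNode.node ℓ U ≠ HNode.ua := by
  intro hc; cases hc

lemma exists_node_of_ne_ua {v : HNode Y} (hv : v ≠ HNode.ua) :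
    ∃ ℓ U, v = HNode.node ℓ U := by
  cases v with
  | ua => exact absurd rfl hv
  | node ℓ U => exact ⟨ℓ, U, rfl⟩

lemma cladeUnion_ua_eq : cladeUnion (HNode.ua : HNode Y) = ∅ := rfl

lemma cladeUnion_node_of_mem {ℓ : Y} {U : Set (Set Y)} {C : Set Y} (hC : C ∈ U) :
    cladeUnion (HNode.node ℓ U) = ⋃₀ U := by
  have : U ≠ ∅ := by
    intro hU; rw [hU] at hC; exact hC
  simp [cladeUnion, this]

lemma clade_ssubset {ℓ : Y} {U : Set (Set Y)} (hP : IsPart U) {C : Set Y} (hC : C ∈ U) :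
    C ⊂ cladeUnion (HNode.node ℓ U) := by
  rw [cladeUnion_node_of_mem hC]
  have hCsub : C ⊆ ⋃₀ U := fun x hx => ⟨C, hC, hx⟩
  have hex : ∃ C' ∈ U, C' ≠ C := by
    by_contra hcon
    push_neg at hcon
    exact hP.2.2.1 C (Set.eq_singleton_iff_unique_mem.mpr ⟨hC, hcon⟩)
  obtain ⟨C', hC', hne⟩ := hex
  obtain ⟨y, hy⟩ := Set.nonempty_iff_ne_empty.mpr (hP.1 C' hC')
  refine ⟨hCsub, fun hsup => ?_⟩
  have hyC : y ∈ C := hsup ⟨C', hC', hy⟩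
  exact (Set.disjoint_left.mp (hP.2.1 C' hC' C hC hne) hy) hyC

variable {V : Set (HNode Y)} {E : Set (HNode Y × HNode Y)}

lemma cladeUnion_ne_empty (h : IsHSDAG V E) {v : HNode Y} (hv : v ∈ V) (hne : v ≠ HNode.ua) :
    cladeUnion v ≠ ∅ := by
  obtain ⟨ℓ, U, rfl⟩ := exists_node_of_ne_ua hne
  have hP := h.valid ℓ U hv
  by_cases hU : U = ∅
  · subst hU; simp [cladeUnion]
  · obtain ⟨C, hC⟩ := Set.nonempty_iff_ne_empty.mpr hU
    rw [cladeUnion_node_of_mem hC]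
    obtain ⟨y, hy⟩ := Set.nonempty_iff_ne_empty.mpr (hP.1 C hC)
    exact Set.nonempty_iff_ne_empty.mp ⟨y, C, hC, hy⟩

lemma cladeUnion_finite (h : IsHSDAG V E) {v : HNode Y} (hv : v ∈ V) :
    (cladeUnion v).Finite := by
  cases v with
  | ua => simp [cladeUnion]
  | node ℓ U =>
    have hP := h.valid ℓ U hv
    by_cases hU : U = ∅
    · subst hU; simp [cladeUnion]
    · simp only [cladeUnion, if_neg hU]
      exact Set.Finite.sUnion hP.2.2.2.1 (fun C hC => hP.2.2.2.2 C hC)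

lemma edge_cu_ssubset (h : IsHSDAG V E) {a b : HNode Y} (hab : (a, b) ∈ E)
    (ha : a ≠ HNode.ua) : cladeUnion b ⊂ cladeUnion a := by
  obtain ⟨ℓ, U, rfl⟩ := exists_node_of_ne_ua ha
  have hC : cladeUnion b ∈ U := h.edge_clade ℓ U b hab
  exact clade_ssubset (h.valid ℓ U (h.edge_mem _ hab).1) hC

lemma reach_ne_ua (h : IsHSDAG V E) {Et : Set (HNode Y × HNode Y)} (hEt : Et ⊆ E)
    {x u : HNode Y} (hx : x ≠ HNode.ua) (hr : Reach Et x u) : u ≠ HNode.ua := by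
  induction hr with
  | refl => exact hx
  | tail _ he _ => exact fun hc => h.no_in_ua _ (hEt (hc ▸ he))

lemma reach_cu_subset (h : IsHSDAG V E) {Et : Set (HNode Y × HNode Y)} (hEt : Et ⊆ E)
    {x u : HNode Y} (hx : x ≠ HNode.ua) (hr : Reach Et x u) :
    cladeUnion u ⊆ cladeUnion x := by
  induction hr with
  | refl => exact subset_rfl
  | @tail z u hz he ih =>
    have hzne : z ≠ HNode.ua := reach_ne_ua h hEt hx hz
    exact ((edge_cu_ssubset h (hEt he) hzne).1).trans ih

/-- No two distinct descendant edges of the same node-clade pair. -/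
def SibUniq (Et : Set (HNode Y × HNode Y)) : Prop :=
  ∀ p q₁ q₂, (p, q₁) ∈ Et → (p, q₂) ∈ Et → cladeUnion q₁ = cladeUnion q₂ → q₁ = q₂

lemma reach_comparable (h : IsHSDAG V E) {Et : Set (HNode Y × HNode Y)} (hEt : Et ⊆ E)
    (hsib : SibUniq Et) :
    ∀ n : ℕ, ∀ x a w : HNode Y, x ≠ HNode.ua → (cladeUnion x).ncard = n →
      Reach Et x a → Reach Et x w → (cladeUnion a ∩ cladeUnion w).Nonempty →
      Reach Et a w ∨ Reach Et w a := by
  intro n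
  induction n using Nat.strong_induction_on with
  | _ n IH =>
    intro x a w hx hn hra hrw hint
    rcases hra.cases_head with heq | ⟨c, hxc, hca⟩
    · exact Or.inl (heq ▸ hrw)
    rcases hrw.cases_head with heq | ⟨d, hxd, hdw⟩
    · exact Or.inr (heq ▸ hra)
    have hcne : c ≠ HNode.ua := fun hc => h.no_in_ua _ (hEt (hc ▸ hxc))
    have hdne : d ≠ HNode.ua := fun hc => h.no_in_ua _ (hEt (hc ▸ hxd))
    have hcd : c = d := by
      by_contra hne
      obtain ⟨ℓ, U, rfl⟩ := exists_node_of_ne_ua hx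
      have hP := h.valid ℓ U (h.edge_mem _ (hEt hxc)).1
      have hcC : cladeUnion c ∈ U := h.edge_clade ℓ U c (hEt hxc)
      have hdC : cladeUnion d ∈ U := h.edge_clade ℓ U d (hEt hxd)
      have hcu : cladeUnion c ≠ cladeUnion d := fun hcu => hne (hsib _ _ _ hxc hxd hcu)
      have hdisj := hP.2.1 _ hcC _ hdC hcu
      obtain ⟨y, hy⟩ := hint
      exact Set.disjoint_left.mp hdisj
        (reach_cu_subset h hEt hcne hca hy.1)
        (reach_cu_subset h hEt hdne hdw hy.2)
    subst hcd
    have hss : cladeUnion c ⊂ cladeUnion x := edge_cu_ssubset h (hEt hxc) hx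
    have hfin : (cladeUnion x).Finite := cladeUnion_finite h (h.edge_mem _ (hEt hxc)).1
    exact IH _ (hn ▸ Set.ncard_lt_ncard hss hfin) c a w hcne rfl hca hdw hint
lemma reach_of_cu_subset (h : IsHSDAG V E) {Et : Set (HNode Y × HNode Y)} (hEt : Et ⊆ E)
    (hsib : SibUniq Et) {x a w : HNode Y} (hx : x ≠ HNode.ua)
    (hra : Reach Et x a) (hrw : Reach Et x w)
    (hsub : cladeUnion a ⊆ cladeUnion w) (hne : cladeUnion a ≠ ∅) :
    Reach Et w a := by
  have hane : a ≠ HNode.ua := by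
    intro hc; subst hc; exact hne cladeUnion_ua_eq
  have hint : (cladeUnion a ∩ cladeUnion w).Nonempty := by
    rw [Set.inter_eq_self_of_subset_left hsub]
    exact Set.nonempty_iff_ne_empty.mpr hne
  rcases reach_comparable h hEt hsib _ x a w hx rfl hra hrw hint with hcase | hcase
  · have hwa : cladeUnion w ⊆ cladeUnion a := reach_cu_subset h hEt hane hcase
    rcases hcase.cases_head with heq | ⟨c, hac, hcw⟩
    · exact heq ▸ Relation.ReflTransGen.refl
    · exfalso
      have hcne : c ≠ HNode.ua := fun hc => h.no_in_ua _ (hEt (hc ▸ hac))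
      have h1 : cladeUnion w ⊆ cladeUnion c := reach_cu_subset h hEt hcne hcw
      have h2 : cladeUnion c ⊂ cladeUnion a := edge_cu_ssubset h (hEt hac) hane
      exact h2.2 (hsub.trans h1)
  · exact hcase

lemma reach_antisymm (h : IsHSDAG V E) {Et : Set (HNode Y × HNode Y)} (hEt : Et ⊆ E)
    {a w : HNode Y} (ha : a ≠ HNode.ua) (h1 : Reach Et a w) (h2 : Reach Et w a) :
    a = w := by
  have hwne : w ≠ HNode.ua := reach_ne_ua h hEt ha h1
  have hcu : cladeUnion a = cladeUnion w :=
    le_antisymm (reach_cu_subset h hEt hwne h2) (reach_cu_subset h hEt ha h1)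
  rcases h1.cases_head with heq | ⟨c, hac, hcw⟩
  · exact heq
  · exfalso
    have hcne : c ≠ HNode.ua := fun hc => h.no_in_ua _ (hEt (hc ▸ hac))
    have hwc : cladeUnion w ⊆ cladeUnion c := reach_cu_subset h hEt hcne hcw
    have hca : cladeUnion c ⊂ cladeUnion a := edge_cu_ssubset h (hEt hac) ha
    exact hca.2 (hcu ▸ hwc)

lemma parent_unique (h : IsHSDAG V E) {Et : Set (HNode Y × HNode Y)} (hEt : Et ⊆ E)
    (hsib : SibUniq Et) {x₀ p q w : HNode Y} (hx₀ : x₀ ≠ HNode.ua)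
    (hrp : Reach Et x₀ p) (hrq : Reach Et x₀ q) (hep : (p, w) ∈ Et) (heq : (q, w) ∈ Et)
    (hpua : p ≠ HNode.ua) (hqua : q ≠ HNode.ua) : p = q := by
  have hwne : cladeUnion w ≠ ∅ := by
    obtain ⟨ℓ, U, rfl⟩ := exists_node_of_ne_ua hpua
    have hP := h.valid ℓ U (h.edge_mem _ (hEt hep)).1
    exact hP.1 _ (h.edge_clade ℓ U w (hEt hep))
  have key : ∀ p' q' : HNode Y, Reach Et p' q' → (p', w) ∈ Et → (q', w) ∈ Et →
      p' ≠ HNode.ua → q' ≠ HNode.ua → p' = q' := by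
    intro p' q' hr hep' heq' hp' hq'
    rcases hr.cases_head with h' | ⟨c, hpc, hcq⟩
    · exact h'
    exfalso
    have hcne : c ≠ HNode.ua := fun hc => h.no_in_ua _ (hEt (hc ▸ hpc))
    obtain ⟨ℓ, U, rfl⟩ := exists_node_of_ne_ua hp'
    have hP := h.valid ℓ U (h.edge_mem _ (hEt hep')).1
    have hwU : cladeUnion w ∈ U := h.edge_clade ℓ U w (hEt hep')
    have hcU : cladeUnion c ∈ U := h.edge_clade ℓ U c (hEt hpc)
    have hqc : cladeUnion q' ⊆ cladeUnion c := reach_cu_subset h hEt hcne hcq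
    have hwq : cladeUnion w ⊂ cladeUnion q' := edge_cu_ssubset h (hEt heq') hq'
    have hwc : cladeUnion w = cladeUnion c := by
      by_contra hne
      obtain ⟨y, hy⟩ := Set.nonempty_iff_ne_empty.mpr hwne
      exact Set.disjoint_left.mp (hP.2.1 _ hwU _ hcU hne) hy (hqc (hwq.1 hy))
    exact hwq.2 (hwc ▸ hqc)
  have hint : (cladeUnion p ∩ cladeUnion q).Nonempty := by
    obtain ⟨y, hy⟩ := Set.nonempty_iff_ne_empty.mpr hwne
    exact ⟨y, (edge_cu_ssubset h (hEt hep) hpua).1 hy,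
      (edge_cu_ssubset h (hEt heq) hqua).1 hy⟩
  rcases reach_comparable h hEt hsib _ x₀ p q hx₀ rfl hrp hrq hint with hc | hc
  · exact key p q hc hep heq hpua hqua
  · exact (key q p hc heq hep hqua hpua).symm

lemma reach_avoid {Et : Set (HNode Y × HNode Y)} {root a c₀ : HNode Y} {u : HNode Y}
    (hr : Reach Et root u) (hu : u ∉ Dnodes Et c₀) :
    Reach (Et \ insert (a, c₀) (Eind Et c₀)) root u := by
  induction hr with
  | refl => exact Relation.ReflTransGen.refl
  | @tail z u hz he ih =>
    have hzD : z ∉ Dnodes Et c₀ := fun hzD => hu (Relation.ReflTransGen.tail hzD he)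
    refine (ih hzD).tail ⟨he, ?_⟩
    intro hmem
    rcases hmem with hmem | hmem
    · have h2 : u = c₀ := (Prod.ext_iff.mp hmem).2
      subst h2
      exact hu Relation.ReflTransGen.refl
    · exact hzD hmem.2

lemma induced_isSub {V' : Set (HNode Y)} {E' : Set (HNode Y × HNode Y)}
    {Vs : Set (HNode Y)} {Es : Set (HNode Y × HNode Y)}
    (hVs : Vs ⊆ V') (hEs : Es ⊆ E')
    (hmem : ∀ e ∈ Es, e.1 ∈ Vs ∧ e.2 ∈ Vs)
    (hud : ∀ ℓ U, HNode.node ℓ U ∈ Vs → ∀ C ∈ U,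
      ∃! vc, (HNode.node ℓ U, vc) ∈ Es ∧ cladeUnion vc = C)
    (hnua : ∀ x, (x, HNode.ua) ∉ Es) {w : HNode Y} (hw : w ∈ Vs) (hwua : w ≠ HNode.ua) :
    IsSubhistoryRooted V' E' (Dnodes Es w) (Eind Es w) w := by
  have hD : Dnodes Es w ⊆ Vs := by
    intro u hu
    induction hu with
    | refl => exact hw
    | tail _ he _ => exact (hmem _ he).2
  refine ⟨hD.trans hVs, (Eind_subset Es w).trans hEs, ?_, ?_, Relation.ReflTransGen.refl, ?_, ?_⟩
  · intro hua
    rcases (mem_Dnodes.mp hua).cases_tail with heq | ⟨z, _, hz⟩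
    · exact hwua heq.symm
    · exact hnua z hz
  · intro e he
    exact ⟨he.2, Relation.ReflTransGen.tail he.2 he.1⟩
  · intro v hv
    induction (mem_Dnodes.mp hv) with
    | refl => exact Relation.ReflTransGen.refl
    | @tail z u hz he ih =>
      exact (ih hz).tail ⟨he, hz⟩
  · intro ℓ U hU C hC
    obtain ⟨vc, ⟨h1, h2⟩, huniq⟩ := hud ℓ U (hD hU) C hC
    exact ⟨vc, ⟨⟨h1, hU⟩, h2⟩, fun y hy => huniq y ⟨hy.1.1, hy.2⟩⟩

lemma sub_induced {V' : Set (HNode Y)} {E' : Set (HNode Y × HNode Y)}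
    {Vs : Set (HNode Y)} {Es : Set (HNode Y × HNode Y)} {vr : HNode Y}
    (s : IsSubhistoryRooted V' E' Vs Es vr) {w : HNode Y} (hw : w ∈ Vs) :
    IsSubhistoryRooted V' E' (Dnodes Es w) (Eind Es w) w :=
  induced_isSub s.subV s.subE s.edge_mem s.unique_desc
    (fun _ hx => s.ua_not_mem ((s.edge_mem _ hx).2)) hw
    (fun hc => s.ua_not_mem (hc ▸ hw))

lemma hist_induced {V' : Set (HNode Y)} {E' : Set (HNode Y × HNode Y)}
    {Vt : Set (HNode Y)} {Et : Set (HNode Y × HNode Y)}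
    (ht : HistoryIn V' E' Vt Et) (hnua : ∀ x, (x, HNode.ua) ∉ Et)
    {w : HNode Y} (hw : w ∈ Vt) (hwua : w ≠ HNode.ua) :
    IsSubhistoryRooted V' E' (Dnodes Et w) (Eind Et w) w :=
  induced_isSub ht.1 ht.2.1 ht.2.2.1.edge_mem ht.2.2.2.2 hnua hw hwua

lemma sib_of_hist {Vt : Set (HNode Y)} {Et : Set (HNode Y × HNode Y)}
    (ht : IsHistory Vt Et) : SibUniq Et := by
  intro p q₁ q₂ h1 h2 hcu
  cases p with
  | ua =>
    obtain ⟨v, _, hu⟩ := ht.2.1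
    rw [hu q₁ h1, hu q₂ h2]
  | node ℓ U =>
    have hp : HNode.node ℓ U ∈ Vt := (ht.1.edge_mem _ h1).1
    have hC : cladeUnion q₁ ∈ U := ht.1.edge_clade ℓ U q₁ h1
    obtain ⟨vc, _, hu⟩ := ht.2.2 ℓ U hp _ hC
    rw [hu q₁ ⟨h1, rfl⟩, hu q₂ ⟨h2, hcu.symm⟩]

lemma sib_of_sub (h : IsHSDAG V E) {V' : Set (HNode Y)} {E' : Set (HNode Y × HNode Y)}
    {Vs : Set (HNode Y)} {Es : Set (HNode Y × HNode Y)} {vr : HNode Y}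
    (s : IsSubhistoryRooted V' E' Vs Es vr) (hEs : Es ⊆ E) : SibUniq Es := by
  intro p q₁ q₂ h1 h2 hcu
  have hp : p ∈ Vs := (s.edge_mem _ h1).1
  obtain ⟨ℓ, U, rfl⟩ := exists_node_of_ne_ua (fun hc : p = HNode.ua => s.ua_not_mem (hc ▸ hp))
  have hC : cladeUnion q₁ ∈ U := h.edge_clade ℓ U q₁ (hEs h1)
  obtain ⟨vc, _, hu⟩ := s.unique_desc ℓ U hp _ hC
  rw [hu q₁ ⟨h1, rfl⟩, hu q₂ ⟨h2, hcu.symm⟩]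

lemma hist_reach_root {V' : Set (HNode Y)} {E' : Set (HNode Y × HNode Y)}
    {Vt : Set (HNode Y)} {Et : Set (HNode Y × HNode Y)}
    (ht : HistoryIn V' E' Vt Et) {r : HNode Y} (hr : (HNode.ua, r) ∈ Et)
    {u : HNode Y} (hu : u ∈ Vt) (huua : u ≠ HNode.ua) : Reach Et r u := by
  rcases (ht.2.2.1.reach_ua u hu).cases_head with heq | ⟨c, hc, hcu⟩
  · exact absurd heq.symm huua
  · obtain ⟨v, _, hq⟩ := ht.2.2.2.1
    have h1 : c = v := hq c hc
    have h2 : r = v := hq r hr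
    rw [h1, ← h2] at hcu
    exact hcu
lemma reach_lift_ne_ua (h : IsHSDAG V E) {Et : Set (HNode Y × HNode Y)} (hEt : Et ⊆ E)
    {r u : HNode Y} (hr : r ≠ HNode.ua) (hreach : Reach Et r u) :
    Reach {e ∈ Et | e.1 ≠ HNode.ua} r u := by
  induction hreach with
  | refl => exact Relation.ReflTransGen.refl
  | @tail z u hz he ih =>
    exact ih.tail ⟨he, reach_ne_ua h hEt hr hz⟩

lemma hist_toSub (h : IsHSDAG V E) {V' : Set (HNode Y)} {E' : Set (HNode Y × HNode Y)}
    {Vt : Set (HNode Y)} {Et : Set (HNode Y × HNode Y)}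
    (ht : HistoryIn V' E' Vt Et) (hEtE : Et ⊆ E) {r : HNode Y} (hr : (HNode.ua, r) ∈ Et) :
    IsSubhistoryRooted V' E' (Vt \ {HNode.ua}) {e ∈ Et | e.1 ≠ HNode.ua} r := by
  have hrne : r ≠ HNode.ua := fun hc => h.no_in_ua _ (hEtE (hc ▸ hr))
  refine ⟨(Set.diff_subset).trans ht.1, (Set.sep_subset _ _).trans ht.2.1, by simp, ?_, ?_, ?_, ?_⟩
  · intro e he
    refine ⟨⟨(ht.2.2.1.edge_mem _ he.1).1, he.2⟩,
      ⟨(ht.2.2.1.edge_mem _ he.1).2, fun hc => h.no_in_ua e.1 ?_⟩⟩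
    have : e = (e.1, HNode.ua) := by
      rw [← hc]
    exact hEtE (this ▸ he.1)
  · exact ⟨(ht.2.2.1.edge_mem _ hr).2, hrne⟩
  · intro v hv
    exact reach_lift_ne_ua h hEtE hrne (hist_reach_root ht hr hv.1 hv.2)
  · intro ℓ U hU C hC
    obtain ⟨vc, ⟨h1, h2⟩, hq⟩ := ht.2.2.2.2 ℓ U hU.1 C hC
    exact ⟨vc, ⟨⟨h1, node_ne_ua⟩, h2⟩, fun y hy => hq y ⟨hy.1.1, hy.2⟩⟩

lemma sub_decomp (h : IsHSDAG V E) {Vs : Set (HNode Y)} {Es : Set (HNode Y × HNode Y)}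
    {ℓ : Y} {U : Set (Set Y)}
    (s : IsSubhistoryRooted V E Vs Es (HNode.node ℓ U))
    {w : Set Y → HNode Y} (hw1 : ∀ C ∈ U, (HNode.node ℓ U, w C) ∈ Es)
    (hw2 : ∀ C ∈ U, cladeUnion (w C) = C) :
    Es = ⋃ C ∈ U, insert (HNode.node ℓ U, w C) (Eind Es (w C)) := by
  apply Set.Subset.antisymm
  · intro e he
    have hsrc : Reach Es (HNode.node ℓ U) e.1 := s.reach_root _ (s.edge_mem _ he).1
    have hE : e ∈ E := s.subE he
    rcases hsrc.cases_head with heq | ⟨c, hxc, hce⟩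
    · have hee : e = (HNode.node ℓ U, e.2) := by rw [heq]
      have heC : cladeUnion e.2 ∈ U := h.edge_clade ℓ U e.2 (hee ▸ hE)
      obtain ⟨vc, _, hq⟩ := s.unique_desc ℓ U s.root_mem _ heC
      have he' : (HNode.node ℓ U, e.2) ∈ Es := hee ▸ he
      have h1 : e.2 = vc := hq e.2 ⟨he', rfl⟩
      have h2 : w (cladeUnion e.2) = vc := hq _ ⟨hw1 _ heC, hw2 _ heC⟩
      refine Set.mem_biUnion heC (Set.mem_insert_iff.mpr (Or.inl ?_))
      have h3 : w (cladeUnion e.2) = e.2 := by rw [h2, h1]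
      rw [h3, heq]
    · have hcC : cladeUnion c ∈ U := h.edge_clade ℓ U c (s.subE hxc)
      obtain ⟨vc, _, hq⟩ := s.unique_desc ℓ U s.root_mem _ hcC
      have h1 : c = vc := hq c ⟨hxc, rfl⟩
      have h2 : w (cladeUnion c) = vc := hq _ ⟨hw1 _ hcC, hw2 _ hcC⟩
      refine Set.mem_biUnion hcC (Set.mem_insert_iff.mpr (Or.inr ⟨he, ?_⟩))
      rw [← h2] at h1
      exact h1 ▸ hce
  · refine Set.iUnion₂_subset fun C hC => ?_
    intro e he
    rcases he with he | he
    · exact he ▸ hw1 C hC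
    · exact he.1

lemma sub_decomp_disj (h : IsHSDAG V E) {Vs : Set (HNode Y)} {Es : Set (HNode Y × HNode Y)}
    {ℓ : Y} {U : Set (Set Y)}
    (s : IsSubhistoryRooted V E Vs Es (HNode.node ℓ U))
    {w : Set Y → HNode Y} (hw1 : ∀ C ∈ U, (HNode.node ℓ U, w C) ∈ Es)
    (hw2 : ∀ C ∈ U, cladeUnion (w C) = C) :
    U.PairwiseDisjoint (fun C => insert (HNode.node ℓ U, w C) (Eind Es (w C))) := by
  have hroot : HNode.node ℓ U ∈ V := s.subV s.root_mem
  have hP : IsPart U := h.valid ℓ U hroot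
  intro C hC C' hC' hne
  have hwne : ∀ D ∈ U, w D ≠ HNode.ua := by
    intro D hD hc
    have : cladeUnion (w D) = ∅ := by rw [hc]; rfl
    exact hP.1 D hD (by rw [← hw2 D hD]; exact this)
  have hnotroot : ∀ D ∈ U, ¬ Reach Es (w D) (HNode.node ℓ U) := by
    intro D hD hreach
    have h1 : cladeUnion (HNode.node ℓ U) ⊆ cladeUnion (w D) :=
      reach_cu_subset h s.subE (hwne D hD) hreach
    rw [hw2 D hD] at h1
    exact (clade_ssubset hP hD).2 h1
  apply Set.disjoint_left.mpr
  intro e he he'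
  rcases he with he | he
  · rcases he' with he' | he'
    · have : w C = w C' := by
        have := he ▸ he'
        exact (Prod.ext_iff.mp this).2
      apply hne
      rw [← hw2 C hC, ← hw2 C' hC', this]
    · exact hnotroot C' hC' (he ▸ he').2
  · rcases he' with he' | he'
    · exact hnotroot C hC (he' ▸ he).2
    · have hsrc : e.1 ∈ Vs := (s.edge_mem _ he.1).1
      have hsne : e.1 ≠ HNode.ua := fun hc => s.ua_not_mem (hc ▸ hsrc)
      have h1 : cladeUnion e.1 ⊆ C := hw2 C hC ▸ reach_cu_subset h s.subE (hwne C hC) he.2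
      have h2 : cladeUnion e.1 ⊆ C' := hw2 C' hC' ▸ reach_cu_subset h s.subE (hwne C' hC') he'.2
      have hCU : cladeUnion e.1 ≠ ∅ := cladeUnion_ne_empty h (s.subV hsrc) hsne
      obtain ⟨y, hy⟩ := Set.nonempty_iff_ne_empty.mpr hCU
      exact Set.disjoint_left.mp (hP.2.1 C hC C' hC' hne) (h1 hy) (h2 hy)

lemma sub_nodes_subset {V' : Set (HNode Y)} {E' : Set (HNode Y × HNode Y)}
    {Vs : Set (HNode Y)} {Es : Set (HNode Y × HNode Y)} {vr : HNode Y}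
    (s : IsSubhistoryRooted V' E' Vs Es vr) : Vs ⊆ insert vr (Prod.snd '' Es) := by
  intro u hu
  rcases (s.reach_root u hu).cases_tail with heq | ⟨z, _, hz⟩
  · exact heq ▸ Set.mem_insert _ _
  · exact Set.mem_insert_iff.mpr (Or.inr ⟨(z, u), hz, rfl⟩)

lemma sub_edges_finite (h : IsHSDAG V E) :
    ∀ n : ℕ, ∀ Vs Es (vr : HNode Y), (cladeUnion vr).ncard = n →
      IsSubhistoryRooted V E Vs Es vr → Set.Finite Es := by
  intro n
  induction n using Nat.strong_induction_on with
  | _ n IH =>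
    intro Vs Es vr hn s
    have hvrne : vr ≠ HNode.ua := fun hc => s.ua_not_mem (hc ▸ s.root_mem)
    obtain ⟨ℓ, U, rfl⟩ := exists_node_of_ne_ua hvrne
    have hP : IsPart U := h.valid ℓ U (s.subV s.root_mem)
    have hex : ∀ C ∈ U, ∃ vc, (HNode.node ℓ U, vc) ∈ Es ∧ cladeUnion vc = C :=
      fun C hC => (s.unique_desc ℓ U s.root_mem C hC).exists
    have hne : Nonempty (HNode Y) := ⟨HNode.ua⟩
    choose! w hw1 hw2 using hex
    rw [sub_decomp h s hw1 hw2]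
    apply Set.Finite.biUnion hP.2.2.2.1
    intro C hC
    have hwmem : w C ∈ Vs := (s.edge_mem _ (hw1 C hC)).2
    have hss : cladeUnion (w C) ⊂ cladeUnion (HNode.node ℓ U) := by
      rw [hw2 C hC]; exact clade_ssubset hP hC
    have hfin : (cladeUnion (HNode.node ℓ U)).Finite :=
      cladeUnion_finite h (s.subV s.root_mem)
    exact Set.Finite.insert _
      (IH _ (hn ▸ Set.ncard_lt_ncard hss hfin) _ _ _ rfl (sub_induced s hwmem))

lemma sub_edges_finite' (h : IsHSDAG V E) {Vs : Set (HNode Y)}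
    {Es : Set (HNode Y × HNode Y)} {vr : HNode Y}
    (s : IsSubhistoryRooted V E Vs Es vr) : Set.Finite Es :=
  sub_edges_finite h _ _ _ vr rfl s

lemma sub_mono {V' : Set (HNode Y)} {E' : Set (HNode Y × HNode Y)}
    {V'' : Set (HNode Y)} {E'' : Set (HNode Y × HNode Y)}
    (hV : V' ⊆ V'') (hE : E' ⊆ E'')
    {Vs : Set (HNode Y)} {Es : Set (HNode Y × HNode Y)} {vr : HNode Y}
    (s : IsSubhistoryRooted V' E' Vs Es vr) : IsSubhistoryRooted V'' E'' Vs Es vr :=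
  ⟨s.subV.trans hV, s.subE.trans hE, s.ua_not_mem, s.edge_mem, s.root_mem,
    s.reach_root, s.unique_desc⟩

lemma reach_into_Eind {Et : Set (HNode Y × HNode Y)} {b w u : HNode Y}
    (hw : Reach Et b w) (hr : Reach Et w u) : Reach (Eind Et b) w u := by
  induction hr with
  | refl => exact Relation.ReflTransGen.refl
  | @tail z u hz he ih =>
    exact ih.tail ⟨he, hw.trans hz⟩

lemma Eind_Eind {Et : Set (HNode Y × HNode Y)} {b w : HNode Y} (hw : Reach Et b w) :
    Eind (Eind Et b) w = Eind Et w := by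
  ext e
  constructor
  · rintro ⟨⟨he, _⟩, hr⟩
    exact ⟨he, reach_mono (Eind_subset Et b) hr⟩
  · rintro ⟨he, hr⟩
    exact ⟨⟨he, hw.trans hr⟩, reach_into_Eind hw hr⟩

lemma hist_edges_finite (h : IsHSDAG V E)
    {Vt : Set (HNode Y)} {Et : Set (HNode Y × HNode Y)}
    (ht : HistoryIn V E Vt Et) : Set.Finite Et := by
  have hEtE : Et ⊆ E := ht.2.1
  obtain ⟨r, hr, hq⟩ := ht.2.2.2.1
  have hsub := hist_toSub h ht hEtE hr
  have hfin : Set.Finite {e ∈ Et | e.1 ≠ HNode.ua} :=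
    sub_edges_finite' h hsub
  refine (hfin.insert (HNode.ua, r)).subset ?_
  intro e he
  by_cases hc : e.1 = HNode.ua
  · have he' : (HNode.ua, e.2) ∈ Et := by rw [← hc]; exact he
    have h1 : e.2 = r := hq e.2 he'
    have : e = (HNode.ua, r) := by rw [← h1, ← hc]
    exact this ▸ Set.mem_insert _ _
  · exact Set.mem_insert_iff.mpr (Or.inr ⟨he, hc⟩)

section Weights

variable {W : Type v} [AddCommMonoid W]

lemma gweight_union (f : HNode Y × HNode Y → W) {s t : Set (HNode Y × HNode Y)}
    (hd : Disjoint s t) (hs : s.Finite) (ht : t.Finite) :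
    gweight f (s ∪ t) = gweight f s + gweight f t :=
  finsum_mem_union hd hs ht

lemma gweight_insert (f : HNode Y × HNode Y → W) {e : HNode Y × HNode Y}
    {s : Set (HNode Y × HNode Y)} (he : e ∉ s) (hs : s.Finite) :
    gweight f (insert e s) = f e + gweight f s :=
  finsum_mem_insert f he hs

lemma gweight_split (f : HNode Y × HNode Y → W) {A B : Set (HNode Y × HNode Y)}
    (hAB : A ⊆ B) (hB : B.Finite) :
    gweight f B = gweight f (B \ A) + gweight f A := by
  calc gweight f B = gweight f ((B \ A) ∪ A) := by rw [Set.diff_union_of_subset hAB]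
    _ = gweight f (B \ A) + gweight f A :=
      gweight_union f disjoint_sdiff_self_left hB.diff (hB.subset hAB)

end Weights
section Swap

variable {W : Type v} [AddCommMonoid W]

lemma swap_hist (h : IsHSDAG V E) (f : HNode Y × HNode Y → W)
    {Vt : Set (HNode Y)} {Et : Set (HNode Y × HNode Y)} (ht : HistoryIn V E Vt Et)
    {a c₀ : HNode Y} (ha : a ≠ HNode.ua) (hac : (a, c₀) ∈ Et)
    {Vs' : Set (HNode Y)} {Es' : Set (HNode Y × HNode Y)} {c' : HNode Y}
    (s' : IsSubhistoryRooted V E Vs' Es' c')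
    (hcu : cladeUnion c' = cladeUnion c₀) (haE : (a, c') ∈ E) :
    HistoryIn V E
        {u | Reach ((Et \ insert (a, c₀) (Eind Et c₀)) ∪ insert (a, c') Es') HNode.ua u}
        ((Et \ insert (a, c₀) (Eind Et c₀)) ∪ insert (a, c') Es') ∧
    gweight f Et = gweight f (Et \ insert (a, c₀) (Eind Et c₀))
        + gweight f (insert (a, c₀) (Eind Et c₀)) ∧
    gweight f ((Et \ insert (a, c₀) (Eind Et c₀)) ∪ insert (a, c') Es')
      = gweight f (Et \ insert (a, c₀) (Eind Et c₀)) + gweight f (insert (a, c') Es') := by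
  have hEtE : Et ⊆ E := ht.2.1
  have hG : IsHSDAG Vt Et := ht.2.2.1
  have hUD := ht.2.2.2.2
  obtain ⟨r, hrEt, hrq⟩ := ht.2.2.2.1
  have hsib : SibUniq Et := sib_of_hist ht.2.2
  set K := insert (a, c₀) (Eind Et c₀) with hKdef
  set rest := Et \ K with hrestdef
  set En := rest ∪ insert (a, c') Es' with hEndef
  have hc₀ne : c₀ ≠ HNode.ua := fun hc => h.no_in_ua a (hEtE (hc ▸ hac))
  have hc'ne : c' ≠ HNode.ua := fun hc => h.no_in_ua a (hc ▸ haE)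
  have hrne : r ≠ HNode.ua := fun hc => h.no_in_ua _ (hEtE (hc ▸ hrEt))
  have haVt : a ∈ Vt := (hG.edge_mem _ hac).1
  have hc₀Vt : c₀ ∈ Vt := (hG.edge_mem _ hac).2
  have hc₀a : cladeUnion c₀ ⊂ cladeUnion a := edge_cu_ssubset h (hEtE hac) ha
  have hreachr : ∀ u ∈ Vt, u ≠ HNode.ua → Reach Et r u :=
    fun u hu hne => hist_reach_root ht hrEt hu hne
  have haD : a ∉ Dnodes Et c₀ := fun hD => hc₀a.2 (reach_cu_subset h hEtE hc₀ne hD)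
  have hparent_r : ∀ x, (x, r) ∈ Et → x = HNode.ua := by
    intro x hx
    by_contra hxne
    have h1 : cladeUnion x ⊆ cladeUnion r :=
      reach_cu_subset h hEtE hrne (hreachr x (hG.edge_mem _ hx).1 hxne)
    exact (edge_cu_ssubset h (hEtE hx) hxne).2 h1
  have hc₀r : c₀ ≠ r := fun hc => ha (hparent_r a (hc ▸ hac))
  have hRestSrc : ∀ e ∈ rest, e.1 ∈ Vt ∧ e.1 ∉ Dnodes Et c₀ := by
    intro e he
    exact ⟨(hG.edge_mem _ he.1).1, fun hD => he.2 (Or.inr ⟨he.1, hD⟩)⟩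
  have hED : ∀ e : HNode Y × HNode Y, e ∈ Et → e.2 ∈ Dnodes Et c₀ → e ∈ K := by
    intro e heE hD
    have h1ne : e.1 ≠ HNode.ua := by
      intro hc
      have her : (HNode.ua, e.2) ∈ Et := by rw [← hc]; exact heE
      have h2r : e.2 = r := hrq e.2 her
      have hDr : Reach Et c₀ r := h2r ▸ hD
      have hrc : Reach Et r c₀ := hreachr c₀ hc₀Vt hc₀ne
      exact hc₀r (reach_antisymm h hEtE hc₀ne hDr hrc)
    rcases (mem_Dnodes.mp hD).cases_tail with h2 | ⟨z, hz, hze⟩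
    · have hee : (e.1, e.2) ∈ Et := heE
      have h1a : e.1 = a :=
        parent_unique h hEtE hsib hrne
          (hreachr e.1 (hG.edge_mem _ heE).1 h1ne) (hreachr a haVt ha)
          (h2 ▸ hee) hac h1ne ha
      have : e = (a, c₀) := by rw [← h1a, ← h2]
      exact this ▸ Set.mem_insert _ _
    · have hzne : z ≠ HNode.ua := reach_ne_ua h hEtE hc₀ne hz
      have h1z : e.1 = z :=
        parent_unique h hEtE hsib hrne
          (hreachr e.1 (hG.edge_mem _ heE).1 h1ne)
          (hreachr z (hG.edge_mem _ hze).1 hzne)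
          heE hze h1ne hzne
      refine Or.inr ⟨heE, ?_⟩
      rw [h1z]
      exact hz
  have hRest2 : ∀ e ∈ rest, e.2 ∉ Dnodes Et c₀ := fun e he hD => he.2 (hED e he.1 hD)
  have hReachRest : ∀ u ∈ Vt, u ∉ Dnodes Et c₀ → Reach rest HNode.ua u :=
    fun u hu hD => reach_avoid (hG.reach_ua u hu) hD
  have hVs'D : ∀ u ∈ Vs', u ∈ Vt → u ∈ Dnodes Et c₀ := by
    intro u hu huVt
    have hune : u ≠ HNode.ua := fun hc => s'.ua_not_mem (hc ▸ hu)
    have h1 : cladeUnion u ⊆ cladeUnion c₀ :=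
      hcu ▸ reach_cu_subset h s'.subE hc'ne (s'.reach_root u hu)
    exact reach_of_cu_subset h hEtE hsib hrne (hreachr u huVt hune)
      (hreachr c₀ hc₀Vt hc₀ne) h1 (cladeUnion_ne_empty h (s'.subV hu) hune)
  have hKEt : K ⊆ Et := by
    intro e he
    rcases he with he | he
    · exact he ▸ hac
    · exact he.1
  have hEnE : En ⊆ E := by
    intro e he
    rcases he with he | he
    · exact hEtE he.1
    · rcases he with he | he
      · exact he ▸ haE
      · exact s'.subE he
  have hEsEn : Es' ⊆ En := fun e he => Or.inr (Set.mem_insert_iff.mpr (Or.inr he))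
  have hrestEn : rest ⊆ En := Set.subset_union_left
  have hacEn : (a, c') ∈ En := Or.inr (Set.mem_insert _ _)
  have hreach_a : Reach En HNode.ua a := reach_mono hrestEn (hReachRest a haVt haD)
  have hreach_c' : Reach En HNode.ua c' := hreach_a.tail hacEn
  have hreachEs' : ∀ u ∈ Vs', Reach En HNode.ua u := fun u hu =>
    hreach_c'.trans (reach_mono hEsEn (s'.reach_root u hu))
  have haVs' : a ∉ Vs' := fun hy => haD (hVs'D a hy haVt)
  have hVnReg : ∀ u, Reach En HNode.ua u →
      u = HNode.ua ∨ (u ∈ Vt ∧ u ∉ Dnodes Et c₀) ∨ u ∈ Vs' := by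
    intro u hu
    induction hu with
    | refl => exact Or.inl rfl
    | @tail z u hz he ih =>
      rcases he with he | he
      · exact Or.inr (Or.inl ⟨(hG.edge_mem _ he.1).2, hRest2 _ he⟩)
      · rcases he with he | he
        · refine Or.inr (Or.inr ?_)
          have h2 : u = c' := congrArg Prod.snd he
          rw [h2]
          exact s'.root_mem
        · exact Or.inr (Or.inr (s'.edge_mem _ he).2)
  have hEnmem : ∀ e ∈ En, Reach En HNode.ua e.1 := by
    intro e he
    rcases he with he | he
    · exact reach_mono hrestEn (hReachRest e.1 (hRestSrc e he).1 (hRestSrc e he).2)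
    · rcases he with he | he
      · rw [(Prod.ext_iff.mp he).1]; exact hreach_a
      · exact hreachEs' e.1 (s'.edge_mem _ he).1
  have hUDn : ∀ ℓ U, HNode.node ℓ U ∈ {u | Reach En HNode.ua u} → ∀ C ∈ U,
      ∃! vc, (HNode.node ℓ U, vc) ∈ En ∧ cladeUnion vc = C := by
    intro ℓ U hu C hC
    rcases hVnReg _ hu with hcase | hcase | hcase
    · exact absurd hcase node_ne_ua
    · obtain ⟨huVt, huD⟩ := hcase
      by_cases hspec : HNode.node ℓ U = a ∧ C = cladeUnion c₀
      · refine ⟨c', ⟨by rw [hspec.1]; exact hacEn, by rw [hcu, hspec.2]⟩, ?_⟩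
        intro y hy
        rcases hy.1 with hy1 | hy1
        · exfalso
          obtain ⟨vc, _, hq⟩ := hUD ℓ U huVt C hC
          have hyc : y = vc := hq y ⟨hy1.1, hy.2⟩
          have hc₀c : c₀ = vc := by
            apply hq
            constructor
            · rw [hspec.1]; exact hac
            · exact hspec.2.symm
          have hyc₀ : y = c₀ := by rw [hyc, ← hc₀c]
          apply hy1.2
          rw [hyc₀, hspec.1]
          exact Set.mem_insert _ _
        · rcases hy1 with hy1 | hy1
          · exact (Prod.ext_iff.mp hy1).2
          · exfalso
            apply haVs'
            rw [← hspec.1]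
            exact (s'.edge_mem _ hy1).1
      · obtain ⟨vc, ⟨hvc1, hvc2⟩, hq⟩ := hUD ℓ U huVt C hC
        have hvcrest : (HNode.node ℓ U, vc) ∈ rest := by
          refine ⟨hvc1, fun hmem => ?_⟩
          rcases hmem with hmem | hmem
          · refine hspec ⟨congrArg Prod.fst hmem, ?_⟩
            have h2 : vc = c₀ := congrArg Prod.snd hmem
            rw [← hvc2, h2]
          · exact huD hmem.2
        refine ⟨vc, ⟨hrestEn hvcrest, hvc2⟩, ?_⟩
        intro y hy
        rcases hy.1 with hy1 | hy1
        · exact hq y ⟨hy1.1, hy.2⟩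
        · rcases hy1 with hy1 | hy1
          · exfalso
            refine hspec ⟨congrArg Prod.fst hy1, ?_⟩
            have h2 : y = c' := congrArg Prod.snd hy1
            rw [← hy.2, h2, hcu]
          · exact absurd (hVs'D _ (s'.edge_mem _ hy1).1 huVt) huD
    · obtain ⟨vc, ⟨hvc1, hvc2⟩, hq⟩ := s'.unique_desc ℓ U hcase C hC
      refine ⟨vc, ⟨hEsEn hvc1, hvc2⟩, ?_⟩
      intro y hy
      rcases hy.1 with hy1 | hy1
      · exfalso
        have hsrc := hRestSrc _ hy1
        exact hsrc.2 (hVs'D _ hcase hsrc.1)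
      · rcases hy1 with hy1 | hy1
        · exfalso
          apply haVs'
          have h2 : HNode.node ℓ U = a := congrArg Prod.fst hy1
          rw [← h2]
          exact hcase
        · exact hq y ⟨hy1, hy.2⟩
  have hruaK : (HNode.ua, r) ∉ K := by
    intro hmem
    rcases hmem with hmem | hmem
    · exact ha ((Prod.ext_iff.mp hmem).1).symm
    · exact (reach_ne_ua h hEtE hc₀ne hmem.2) rfl
  have huaq : ∃! v, (HNode.ua, v) ∈ En := by
    refine ⟨r, hrestEn ⟨hrEt, hruaK⟩, ?_⟩
    intro y hy
    rcases hy with hy | hy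
    · exact hrq y hy.1
    · rcases hy with hy | hy
      · exact absurd ((Prod.ext_iff.mp hy).1).symm ha
      · exact absurd (s'.edge_mem _ hy).1 s'.ua_not_mem
  have hVnV : ∀ u, Reach En HNode.ua u → u ∈ V := by
    intro u hu
    induction hu with
    | refl => exact h.ua_mem
    | tail _ he _ => exact (h.edge_mem _ (hEnE he)).2
  have hHSDAG : IsHSDAG {u | Reach En HNode.ua u} En := by
    refine ⟨Relation.ReflTransGen.refl, ?_, ?_, ?_, ?_, ?_, ?_⟩
    · intro ℓ U hu; exact h.valid ℓ U (hVnV _ hu)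
    · intro e he; exact ⟨hEnmem e he, (hEnmem e he).tail he⟩
    · intro v hv; exact hv
    · intro v hv; exact h.no_in_ua v (hEnE hv)
    · intro ℓ U v hv; exact h.edge_clade ℓ U v (hEnE hv)
    · intro ℓ U hu C hC
      obtain ⟨vc, hvc, _⟩ := hUDn ℓ U hu C hC
      exact ⟨vc, hvc.1, hvc.2⟩
  have hEtfin : Et.Finite := hist_edges_finite h ht
  have hEs'fin : Es'.Finite := sub_edges_finite' h s'
  have hw1 : gweight f Et = gweight f rest + gweight f K := gweight_split f hKEt hEtfin
  have hdisj : Disjoint rest (insert (a, c') Es') := by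
    rw [Set.disjoint_left]
    intro e he he'
    rcases he' with he' | he'
    · subst he'
      have hc'c₀ : c' = c₀ := hsib a c' c₀ he.1 hac hcu
      apply he.2
      rw [hc'c₀]
      exact Set.mem_insert _ _
    · have hsrc := hRestSrc _ he
      exact hsrc.2 (hVs'D _ (s'.edge_mem _ he').1 hsrc.1)
  have hw2 : gweight f En = gweight f rest + gweight f (insert (a, c') Es') :=
    gweight_union f hdisj hEtfin.diff (hEs'fin.insert _)
  exact ⟨⟨fun u hu => hVnV u hu, hEnE, hHSDAG, huaq, hUDn⟩, hw1, hw2⟩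

end Swap
section Ordered

variable {W : Type v} [AddCommMonoid W] [PartialOrder W] {f : HNode Y × HNode Y → W}

lemma aug_mem (h : IsHSDAG V E) {t : Hist Y} (hT : t ∈ minHistories f V E)
    {a c : HNode Y} (hac : (a, c) ∈ t.2) :
    gweight f (insert (a, c) (Eind t.2 c)) ∈ augWeights f V E a (cladeUnion c) := by
  have hcne : c ≠ HNode.ua := fun hc => h.no_in_ua a (hT.1.2.1 (hc ▸ hac))
  have hnua : ∀ x, (x, HNode.ua) ∉ t.2 := fun x hx => h.no_in_ua x (hT.1.2.1 hx)
  exact ⟨c, Dnodes t.2 c, Eind t.2 c, hT.1.2.1 hac, rfl,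
    hist_induced hT.1 hnua (hT.1.2.2.1.edge_mem _ hac).2 hcne, rfl⟩

lemma base_not_lt (h : IsHSDAG V E) (hco : CladeOrdered f V E)
    {t₃ t₄ : Hist Y} (h₃ : t₃ ∈ minHistories f V E) (h₄ : t₄ ∈ minHistories f V E)
    {a c₃ c₄ : HNode Y} (ha : a ≠ HNode.ua) (h3e : (a, c₃) ∈ t₃.2) (h4e : (a, c₄) ∈ t₄.2)
    (hcu : cladeUnion c₄ = cladeUnion c₃) :
    ¬ gweight f (insert (a, c₄) (Eind t₄.2 c₄))
        < gweight f (insert (a, c₃) (Eind t₃.2 c₃)) := by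
  intro hlt
  have hc₄ne : c₄ ≠ HNode.ua := fun hc => h.no_in_ua a (h₄.1.2.1 (hc ▸ h4e))
  have hnua4 : ∀ x, (x, HNode.ua) ∉ t₄.2 := fun x hx => h.no_in_ua x (h₄.1.2.1 hx)
  have s' : IsSubhistoryRooted V E (Dnodes t₄.2 c₄) (Eind t₄.2 c₄) c₄ :=
    hist_induced h₄.1 hnua4 (h₄.1.2.2.1.edge_mem _ h4e).2 hc₄ne
  obtain ⟨hHist, hw1, hw2⟩ := swap_hist h f h₃.1 ha h3e s' hcu (h₄.1.2.1 h4e)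
  obtain ⟨ℓ, U, rfl⟩ := exists_node_of_ne_ua ha
  have haV : HNode.node ℓ U ∈ V := (h.edge_mem _ (h₃.1.2.1 h3e)).1
  have hCU : cladeUnion c₃ ∈ U := h.edge_clade ℓ U c₃ (h₃.1.2.1 h3e)
  have hRA := (hco.2.1 ℓ U haV (cladeUnion c₃) hCU).2
  have hm3 := aug_mem h h₃ h3e
  have hm4 := aug_mem h h₄ h4e
  rw [hcu] at hm4
  have hlt2 := (hRA _ hm4 _ hm3
    (gweight f (t₃.2 \ insert (HNode.node ℓ U, c₃) (Eind t₃.2 c₃)))).mp hlt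
  have hlt3 : gweight f ((t₃.2 \ insert (HNode.node ℓ U, c₃) (Eind t₃.2 c₃))
      ∪ insert (HNode.node ℓ U, c₄) (Eind t₄.2 c₄)) < gweight f t₃.2 := by
    rw [hw2, hw1,
      add_comm (gweight f (t₃.2 \ insert (HNode.node ℓ U, c₃) (Eind t₃.2 c₃)))
        (gweight f (insert (HNode.node ℓ U, c₄) (Eind t₄.2 c₄))),
      add_comm (gweight f (t₃.2 \ insert (HNode.node ℓ U, c₃) (Eind t₃.2 c₃)))
        (gweight f (insert (HNode.node ℓ U, c₃) (Eind t₃.2 c₃)))]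
    exact hlt2
  exact hlt3.not_ge (h₃.2 (_, _) hHist)

lemma base_eq (h : IsHSDAG V E) (hco : CladeOrdered f V E)
    {t₃ t₄ : Hist Y} (h₃ : t₃ ∈ minHistories f V E) (h₄ : t₄ ∈ minHistories f V E)
    {a c₃ c₄ : HNode Y} (ha : a ≠ HNode.ua) (h3e : (a, c₃) ∈ t₃.2) (h4e : (a, c₄) ∈ t₄.2)
    (hcu : cladeUnion c₄ = cladeUnion c₃) :
    gweight f (insert (a, c₃) (Eind t₃.2 c₃)) = gweight f (insert (a, c₄) (Eind t₄.2 c₄)) := by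
  have hn1 := base_not_lt h hco h₃ h₄ ha h3e h4e hcu
  have hn2 := base_not_lt h hco h₄ h₃ ha h4e h3e hcu.symm
  obtain ⟨ℓ, U, rfl⟩ := exists_node_of_ne_ua ha
  have haV : HNode.node ℓ U ∈ V := (h.edge_mem _ (h₃.1.2.1 h3e)).1
  have hCU : cladeUnion c₃ ∈ U := h.edge_clade ℓ U c₃ (h₃.1.2.1 h3e)
  have hTot := (hco.2.1 ℓ U haV (cladeUnion c₃) hCU).1
  have hm3 := aug_mem h h₃ h3e
  have hm4 := aug_mem h h₄ h4e
  rw [hcu] at hm4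
  rcases hTot _ hm3 _ hm4 with hle | hle
  · exact hle.lt_or_eq.resolve_left hn2
  · exact (hle.lt_or_eq.resolve_left hn1).symm

lemma master (h : IsHSDAG V E) (hco : CladeOrdered f V E) :
    ∀ n : ℕ, ∀ t₃ : Hist Y, t₃ ∈ minHistories f V E → ∀ b : HNode Y, b ∈ t₃.1 →
      b ≠ HNode.ua → (cladeUnion b).ncard = n →
      ∀ Vs Es, IsSubhistoryRooted (unionV (minHistories f V E))
        (unionE (minHistories f V E)) Vs Es b →
      gweight f Es = gweight f (Eind t₃.2 b) := by
  intro n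
  induction n using Nat.strong_induction_on with
  | _ n IH =>
  intro t₃ hT₃ b hb hbua hn Vs Es s
  have hVV : unionV (minHistories f V E) ⊆ V := by
    intro u hu
    simp only [unionV, Set.mem_iUnion] at hu
    obtain ⟨t, ht, hu⟩ := hu
    exact ht.1.1 hu
  have hEE : unionE (minHistories f V E) ⊆ E := by
    intro e he
    simp only [unionE, Set.mem_iUnion] at he
    obtain ⟨t, ht, he⟩ := he
    exact ht.1.2.1 he
  have sV : IsSubhistoryRooted V E Vs Es b := sub_mono hVV hEE s
  obtain ⟨ℓ, U, rfl⟩ := exists_node_of_ne_ua hbua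
  have hbV : HNode.node ℓ U ∈ V := hT₃.1.1 hb
  have hP : IsPart U := h.valid ℓ U hbV
  have hnua3 : ∀ x, (x, HNode.ua) ∉ t₃.2 := fun x hx => h.no_in_ua x (hT₃.1.2.1 hx)
  have s₃ : IsSubhistoryRooted V E (Dnodes t₃.2 (HNode.node ℓ U))
      (Eind t₃.2 (HNode.node ℓ U)) (HNode.node ℓ U) :=
    hist_induced hT₃.1 hnua3 hb node_ne_ua
  have hnon : Nonempty (HNode Y) := ⟨HNode.ua⟩
  have hex : ∀ C ∈ U, ∃ vc, (HNode.node ℓ U, vc) ∈ Es ∧ cladeUnion vc = C :=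
    fun C hC => (sV.unique_desc ℓ U sV.root_mem C hC).exists
  choose! w hw1 hw2 using hex
  have hex3 : ∀ C ∈ U, ∃ vc, (HNode.node ℓ U, vc) ∈ Eind t₃.2 (HNode.node ℓ U) ∧
      cladeUnion vc = C :=
    fun C hC => (s₃.unique_desc ℓ U s₃.root_mem C hC).exists
  choose! w3 hw31 hw32 using hex3
  have hbfin : (cladeUnion (HNode.node ℓ U)).Finite := cladeUnion_finite h hbV
  have hdec : Es = ⋃ C ∈ U, insert (HNode.node ℓ U, w C) (Eind Es (w C)) :=
    sub_decomp h sV hw1 hw2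
  have hdec3 : Eind t₃.2 (HNode.node ℓ U) = ⋃ C ∈ U,
      insert (HNode.node ℓ U, w3 C) (Eind (Eind t₃.2 (HNode.node ℓ U)) (w3 C)) :=
    sub_decomp h s₃ hw31 hw32
  have hfin1 : ∀ C ∈ U, (insert (HNode.node ℓ U, w C) (Eind Es (w C))).Finite :=
    fun C hC => (sub_edges_finite' h
      (sub_induced sV ((sV.edge_mem _ (hw1 C hC)).2))).insert _
  have hfin3 : ∀ C ∈ U,
      (insert (HNode.node ℓ U, w3 C) (Eind (Eind t₃.2 (HNode.node ℓ U)) (w3 C))).Finite :=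
    fun C hC => (sub_edges_finite' h
      (sub_induced s₃ ((s₃.edge_mem _ (hw31 C hC)).2))).insert _
  have hterm : ∀ C ∈ U,
      gweight f (insert (HNode.node ℓ U, w C) (Eind Es (w C)))
        = gweight f (insert (HNode.node ℓ U, w3 C)
            (Eind (Eind t₃.2 (HNode.node ℓ U)) (w3 C))) := by
    intro C hC
    have hw3Et : (HNode.node ℓ U, w3 C) ∈ t₃.2 := (hw31 C hC).1
    have hEindEq : Eind (Eind t₃.2 (HNode.node ℓ U)) (w3 C) = Eind t₃.2 (w3 C) :=
      Eind_Eind (Relation.ReflTransGen.single hw3Et)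
    rw [hEindEq]
    have hwE' : (HNode.node ℓ U, w C) ∈ unionE (minHistories f V E) := s.subE (hw1 C hC)
    simp only [unionE, Set.mem_iUnion] at hwE'
    obtain ⟨t₄, hT₄, h4e⟩ := hwE'
    have hwEt4 : w C ∈ t₄.1 := (hT₄.1.2.2.1.edge_mem _ h4e).2
    have hwne : w C ≠ HNode.ua := fun hc => h.no_in_ua _ (hT₄.1.2.1 (hc ▸ h4e))
    have hss : cladeUnion (w C) ⊂ cladeUnion (HNode.node ℓ U) := by
      rw [hw2 C hC]; exact clade_ssubset hP hC
    have hlt : (cladeUnion (w C)).ncard < n := hn ▸ Set.ncard_lt_ncard hss hbfin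
    have hIH : gweight f (Eind Es (w C)) = gweight f (Eind t₄.2 (w C)) :=
      IH _ hlt t₄ hT₄ (w C) hwEt4 hwne rfl _ _
        (sub_induced s ((s.edge_mem _ (hw1 C hC)).2))
    have hnm1 : (HNode.node ℓ U, w C) ∉ Eind Es (w C) := by
      intro hmem
      exact hss.2 (reach_cu_subset h sV.subE hwne hmem.2)
    have hnm4 : (HNode.node ℓ U, w C) ∉ Eind t₄.2 (w C) := by
      intro hmem
      exact hss.2 (reach_cu_subset h hT₄.1.2.1 hwne hmem.2)
    have hfEs : (Eind Es (w C)).Finite :=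
      sub_edges_finite' h (sub_induced sV ((sV.edge_mem _ (hw1 C hC)).2))
    have hnua4 : ∀ x, (x, HNode.ua) ∉ t₄.2 := fun x hx => h.no_in_ua x (hT₄.1.2.1 hx)
    have hfE4 : (Eind t₄.2 (w C)).Finite :=
      sub_edges_finite' h (hist_induced hT₄.1 hnua4 hwEt4 hwne)
    calc gweight f (insert (HNode.node ℓ U, w C) (Eind Es (w C)))
        = f (HNode.node ℓ U, w C) + gweight f (Eind Es (w C)) := gweight_insert f hnm1 hfEs
      _ = f (HNode.node ℓ U, w C) + gweight f (Eind t₄.2 (w C)) := by rw [hIH]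
      _ = gweight f (insert (HNode.node ℓ U, w C) (Eind t₄.2 (w C))) :=
          (gweight_insert f hnm4 hfE4).symm
      _ = gweight f (insert (HNode.node ℓ U, w3 C) (Eind t₃.2 (w3 C))) :=
          base_eq h hco hT₄ hT₃ node_ne_ua h4e hw3Et (by rw [hw32 C hC, hw2 C hC])
  calc gweight f Es
      = ∑ᶠ C ∈ U, gweight f (insert (HNode.node ℓ U, w C) (Eind Es (w C))) := by
        conv_lhs => rw [hdec]
        exact finsum_mem_biUnion (sub_decomp_disj h sV hw1 hw2) hP.2.2.2.1 hfin1
    _ = ∑ᶠ C ∈ U, gweight f (insert (HNode.node ℓ U, w3 C)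
          (Eind (Eind t₃.2 (HNode.node ℓ U)) (w3 C))) := finsum_mem_congr rfl hterm
    _ = gweight f (Eind t₃.2 (HNode.node ℓ U)) := by
        conv_rhs => rw [hdec3]
        exact (finsum_mem_biUnion (sub_decomp_disj h s₃ hw31 hw32) hP.2.2.2.1 hfin3).symm

end Ordered
end TrimProof
/-- Corollary `trimDAG`: every history sDAG has a trim whose histories
are exactly the minimum-weight histories of the original history sDAG. -/
theorem exists_min_weight_trim {W : Type v} [AddCommMonoid W] [PartialOrder W]
    (V : Set (HNode Y)) (E : Set (HNode Y × HNode Y)) (h : IsHSDAG V E)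
    (f : HNode Y × HNode Y → W) (hco : CladeOrdered f V E) :
    ∃ V' E', IsHSDAG V' E' ∧ V' ⊆ V ∧ E' ⊆ E ∧
      ∀ Vt Et, (HistoryIn V' E' Vt Et ↔
        (HistoryIn V E Vt Et ∧
          ∀ Vt' Et', HistoryIn V E Vt' Et' → gweight f Et ≤ gweight f Et')) := by
  classical
  by_cases hne : (minHistories f V E).Nonempty
  · obtain ⟨t₀, ht₀⟩ := hne
    have hVV : unionV (minHistories f V E) ⊆ V := by
      intro u hu
      simp only [unionV, Set.mem_iUnion] at hu
      obtain ⟨t, ht, hu⟩ := hu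
      exact ht.1.1 hu
    have hEE : unionE (minHistories f V E) ⊆ E := by
      intro e he
      simp only [unionE, Set.mem_iUnion] at he
      obtain ⟨t, ht, he⟩ := he
      exact ht.1.2.1 he
    refine ⟨unionV (minHistories f V E), unionE (minHistories f V E), ?_, hVV, hEE, ?_⟩
    · refine ⟨?_, ?_, ?_, ?_, ?_, ?_, ?_⟩
      · exact Set.mem_biUnion ht₀ ht₀.1.2.2.1.ua_mem
      · intro ℓ U hu; exact h.valid ℓ U (hVV hu)
      · intro e he
        simp only [unionE, Set.mem_iUnion] at he
        obtain ⟨t, ht, he⟩ := he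
        exact ⟨Set.mem_biUnion ht (ht.1.2.2.1.edge_mem _ he).1,
          Set.mem_biUnion ht (ht.1.2.2.1.edge_mem _ he).2⟩
      · intro v hv
        simp only [unionV, Set.mem_iUnion] at hv
        obtain ⟨t, ht, hv⟩ := hv
        exact reach_mono (fun e he => Set.mem_biUnion ht he) (ht.1.2.2.1.reach_ua v hv)
      · intro v hv; exact h.no_in_ua v (hEE hv)
      · intro ℓ U v hv; exact h.edge_clade ℓ U v (hEE hv)
      · intro ℓ U hu C hC
        simp only [unionV, Set.mem_iUnion] at hu
        obtain ⟨t, ht, hu⟩ := hu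
        obtain ⟨v, hv1, hv2⟩ := ht.1.2.2.1.clade_cov ℓ U hu C hC
        exact ⟨v, Set.mem_biUnion ht hv1, hv2⟩
    · intro Vt Et
      constructor
      · intro hH
        have hHVE : HistoryIn V E Vt Et := ⟨hH.1.trans hVV, hH.2.1.trans hEE, hH.2.2⟩
        refine ⟨hHVE, ?_⟩
        obtain ⟨r, hrE, hrq⟩ := hH.2.2.2.1
        have hrE' : (HNode.ua, r) ∈ unionE (minHistories f V E) := hH.2.1 hrE
        simp only [unionE, Set.mem_iUnion] at hrE'
        obtain ⟨t₃, hT₃, h3r⟩ := hrE'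
        have hrne : r ≠ HNode.ua := fun hc => h.no_in_ua _ (hHVE.2.1 (hc ▸ hrE))
        have hrt₃ : r ∈ t₃.1 := (hT₃.1.2.2.1.edge_mem _ h3r).2
        have hsub := hist_toSub h hH hHVE.2.1 hrE
        have hmaster := master h hco _ t₃ hT₃ r hrt₃ hrne rfl _ _ hsub
        have hEtfin : Et.Finite := hist_edges_finite h hHVE
        have hE3fin : t₃.2.Finite := hist_edges_finite h hT₃.1
        have hEteq : Et = insert (HNode.ua, r) {e ∈ Et | e.1 ≠ HNode.ua} := by
          apply Set.Subset.antisymm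
          · intro e he
            by_cases hc : e.1 = HNode.ua
            · have he' : (HNode.ua, e.2) ∈ Et := by rw [← hc]; exact he
              have h1 : e.2 = r := hrq e.2 he'
              have h2 : e = (HNode.ua, r) := by rw [← h1, ← hc]
              exact h2 ▸ Set.mem_insert _ _
            · exact Set.mem_insert_iff.mpr (Or.inr ⟨he, hc⟩)
          · intro e he
            rcases he with he | he
            · exact he ▸ hrE
            · exact he.1
        obtain ⟨r₃u, h3u, h3q⟩ := hT₃.1.2.2.2.1
        have hE3eq : t₃.2 = insert (HNode.ua, r) (Eind t₃.2 r) := by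
          apply Set.Subset.antisymm
          · intro e he
            by_cases hc : e.1 = HNode.ua
            · have he' : (HNode.ua, e.2) ∈ t₃.2 := by rw [← hc]; exact he
              have h1 : e.2 = r := by rw [h3q e.2 he', ← h3q r h3r]
              have h2 : e = (HNode.ua, r) := by rw [← h1, ← hc]
              exact h2 ▸ Set.mem_insert _ _
            · refine Set.mem_insert_iff.mpr (Or.inr ⟨he, ?_⟩)
              exact hist_reach_root hT₃.1 h3r (hT₃.1.2.2.1.edge_mem _ he).1 hc
          · intro e he
            rcases he with he | he
            · exact he ▸ h3r
            · exact he.1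
        have hnm1 : (HNode.ua, r) ∉ {e : HNode Y × HNode Y | e ∈ Et ∧ e.1 ≠ HNode.ua} :=
          fun hc => hc.2 rfl
        have hnm2 : (HNode.ua, r) ∉ Eind t₃.2 r :=
          fun hc => (reach_ne_ua h hT₃.1.2.1 hrne hc.2) rfl
        have hgEt : gweight f Et = gweight f t₃.2 := by
          conv_lhs => rw [hEteq]
          conv_rhs => rw [hE3eq]
          rw [gweight_insert f hnm1 (hEtfin.subset (Set.sep_subset _ _)),
            gweight_insert f hnm2 (hE3fin.subset (Eind_subset _ _)), hmaster]
        intro Vt' Et' hH'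
        rw [hgEt]
        exact hT₃.2 (Vt', Et') hH'
      · rintro ⟨hH, hmin⟩
        have hmem : (Vt, Et) ∈ minHistories f V E :=
          ⟨hH, fun t' ht' => hmin t'.1 t'.2 ht'⟩
        exact ⟨fun u hu => Set.mem_biUnion hmem hu,
          fun e he => Set.mem_biUnion hmem he, hH.2.2⟩
  · refine ⟨{HNode.ua}, ∅, ?_, Set.singleton_subset_iff.mpr h.ua_mem, Set.empty_subset _, ?_⟩
    · refine ⟨rfl, ?_, ?_, ?_, ?_, ?_, ?_⟩
      · intro ℓ U hu
        exact absurd (Set.mem_singleton_iff.mp hu) node_ne_ua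
      · intro e he; exact absurd he (Set.notMem_empty _)
      · intro v hv
        rw [Set.mem_singleton_iff] at hv
        subst hv
        exact Relation.ReflTransGen.refl
      · intro v hv; exact absurd hv (Set.notMem_empty _)
      · intro ℓ U v hv; exact absurd hv (Set.notMem_empty _)
      · intro ℓ U hu
        exact absurd (Set.mem_singleton_iff.mp hu) node_ne_ua
    · intro Vt Et
      constructor
      · intro hH
        exfalso
        obtain ⟨r, hr, _⟩ := hH.2.2.2.1
        exact hH.2.1 hr
      · rintro ⟨hH, hmin⟩
        exact absurd ⟨(Vt, Et), hH, fun t' ht' => hmin t'.1 t'.2 ht'⟩ hne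

end HistorySDAGs
end

section
/- Let T be a set of histories with labels in Y and with a fixed set of leaf labels X ⊆ Y, i.e., L(t) = X for all t ∈ T. Then every history t ∈ D(T) satisfies L(t) = X. -/
universe u v

namespace HistorySDAGs

variable {Y : Type u}

variable {W : Type v}

lemma cu_finite {V : Set (HNode Y)} {E : Set (HNode Y × HNode Y)}
    (hG : IsHSDAG V E) {ℓ : Y} {U : Set (Set Y)} (h : HNode.node ℓ U ∈ V) :
    (cladeUnion (HNode.node ℓ U)).Finite := by
  obtain ⟨-, -, -, hUfin, hCfin⟩ := hG.valid ℓ U h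
  by_cases hU : U = ∅
  · simp [cladeUnion, hU]
  · simpa [cladeUnion, hU] using Set.Finite.sUnion hUfin hCfin

lemma reach_cu {V : Set (HNode Y)} {E : Set (HNode Y × HNode Y)}
    (hG : IsHSDAG V E) {v₀ : HNode Y} (h0 : (HNode.ua, v₀) ∈ E) :
    ∀ w, Reach E v₀ w → w ≠ HNode.ua ∧ cladeUnion w ⊆ cladeUnion v₀ := by
  intro w hw
  induction hw with
  | refl =>
      refine ⟨?_, subset_rfl⟩
      rintro rfl
      exact hG.no_in_ua _ h0
  | tail hb hbc ih =>
      rename_i b c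
      obtain ⟨hbne, hbsub⟩ := ih
      have hcne : c ≠ HNode.ua := by
        rintro rfl; exact hG.no_in_ua _ hbc
      cases b with
      | ua => exact absurd rfl hbne
      | node ℓ U =>
          have hcu : cladeUnion c ∈ U := hG.edge_clade ℓ U c hbc
          have hUne : U ≠ ∅ := by
            rintro rfl; exact hcu
          refine ⟨hcne, fun y hy => hbsub ?_⟩
          simp only [cladeUnion, if_neg hUne]
          exact ⟨cladeUnion c, hcu, hy⟩

lemma cu_leaf {V : Set (HNode Y)} {E : Set (HNode Y × HNode Y)}
    (hG : IsHSDAG V E) :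
    ∀ n (v : HNode Y), v ∈ V → v ≠ HNode.ua → (cladeUnion v).ncard ≤ n →
      ∀ y ∈ cladeUnion v, HNode.node y ∅ ∈ V := by
  intro n
  induction n with
  | zero =>
      intro v hv hvne hcard y hy
      cases v with
      | ua => exact absurd rfl hvne
      | node ℓ U =>
          have hfin := cu_finite hG hv
          have : (cladeUnion (HNode.node ℓ U)).ncard = 0 := Nat.le_zero.mp hcard
          have hempty : cladeUnion (HNode.node ℓ U) = ∅ :=
            (Set.ncard_eq_zero hfin).mp this
          rw [hempty] at hy
          exact absurd hy (Set.notMem_empty y)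
  | succ n ih =>
      intro v hv hvne hcard y hy
      cases v with
      | ua => exact absurd rfl hvne
      | node ℓ U =>
          by_cases hU : U = ∅
          · subst hU
            have : y = ℓ := by simpa [cladeUnion] using hy
            subst this
            exact hv
          · have hy' : y ∈ ⋃₀ U := by simpa [cladeUnion, hU] using hy
            obtain ⟨C, hCU, hyC⟩ := hy'
            obtain ⟨vc, hvc, hcu⟩ := hG.clade_cov ℓ U hv C hCU
            have hvcV : vc ∈ V := (hG.edge_mem _ hvc).2
            have hvcne : vc ≠ HNode.ua := by
              rintro rfl; exact hG.no_in_ua _ hvc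
            -- C is strictly smaller than cladeUnion v
            obtain ⟨hne, hdisj, hns, hUfin, hCfin⟩ := hG.valid ℓ U hv
            obtain ⟨C', hC'U, hC'ne⟩ : ∃ C' ∈ U, C' ≠ C := by
              by_contra hcon
              push_neg at hcon
              exact hns C (Set.eq_singleton_iff_unique_mem.mpr ⟨hCU, hcon⟩)
            obtain ⟨x, hx⟩ := Set.nonempty_iff_ne_empty.mpr (hne C' hC'U)
            have hxnotC : x ∉ C :=
              fun hxC => (hdisj C' hC'U C hCU hC'ne).ne_of_mem hx hxC rfl
            have hCsub : C ⊂ cladeUnion (HNode.node ℓ U) := by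
              rw [show cladeUnion (HNode.node ℓ U) = ⋃₀ U by simp [cladeUnion, hU]]
              constructor
              · exact fun z hz => ⟨C, hCU, hz⟩
              · intro hsub
                exact hxnotC (hsub ⟨C', hC'U, hx⟩)
            have hlt : C.ncard < (cladeUnion (HNode.node ℓ U)).ncard :=
              Set.ncard_lt_ncard hCsub (cu_finite hG hv)
            have hle : (cladeUnion vc).ncard ≤ n := by
              rw [hcu]; omega
            exact ih vc hvcV hvcne hle y (by rw [hcu]; exact hyC)

lemma leafLabels_eq {V : Set (HNode Y)} {E : Set (HNode Y × HNode Y)}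
    (h : IsHistory V E) {v₀ : HNode Y} (h0 : (HNode.ua, v₀) ∈ E) :
    leafLabels V = cladeUnion v₀ := by
  obtain ⟨hG, ⟨w, hw, hwuniq⟩, -⟩ := h
  ext y
  constructor
  · intro hy
    have hleafV : HNode.node y ∅ ∈ V := hy
    have hreach := hG.reach_ua _ hleafV
    rcases Relation.ReflTransGen.cases_head hreach with heq | ⟨c, hc, hcr⟩
    · exact absurd heq.symm (by simp)
    · have : c = v₀ := (hwuniq c hc).trans (hwuniq v₀ h0).symm
      subst this
      have := (reach_cu hG h0 _ hcr).2
      exact this (by simp [cladeUnion])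
  · intro hy
    have hv₀V : v₀ ∈ V := (hG.edge_mem _ h0).2
    have hv₀ne : v₀ ≠ HNode.ua := (reach_cu hG h0 v₀ Relation.ReflTransGen.refl).1
    exact cu_leaf hG (cladeUnion v₀).ncard v₀ hv₀V hv₀ne le_rfl y hy

/-- Observation `fixedleaves`: if all histories in `T` have leaf label
set `X`, then so does every history in the history sDAG constructed from `T`. -/
theorem fixed_leaves
    (T : Set (Hist Y)) (hT : ∀ t ∈ T, IsHistory t.1 t.2)
    (X : Set Y) (hX : ∀ t ∈ T, leafLabels t.1 = X)
    (t : Hist Y) (ht : HistoryIn (unionV T) (unionE T) t.1 t.2) :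
    leafLabels t.1 = X := by
  obtain ⟨hV, hE, hhist⟩ := ht
  obtain ⟨v₀, h0, -⟩ := hhist.2.1
  have h1 : leafLabels t.1 = cladeUnion v₀ := leafLabels_eq hhist h0
  have h2 : (HNode.ua, v₀) ∈ unionE T := hE h0
  simp only [unionE, Set.mem_iUnion] at h2
  obtain ⟨t', ht', h0'⟩ := h2
  have h3 : leafLabels t'.1 = cladeUnion v₀ := leafLabels_eq (hT t' ht') h0'
  rw [h1, ← h3, hX t' ht']

end HistorySDAGs
end
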